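/- Characteristic function identity: for every t ∈ [0,1], every Δt ∈ ℝ, and every k ∈ ℝ, ∫_ℝ ∫_ℝ exp(i k (x + v Δt)) ρ₀(x − tv) ρ₁(x + (1−t)v) dv dx = ∫_ℝ ∫_ℝ exp(i k ((1−t−Δt) x₀ + (t+Δt) x₁)) ρ₀(x₀) ρ₁(x₁) dx₀ dx₁. -/

import Mathlib

open MeasureTheory Complex

/-- characteristic function identity: for every `t ∈ [0,1]`,
`Δt ∈ ℝ` and `k ∈ ℝ`,
`∫ ∫ exp(i k (x + v Δt)) ρ₀(x − tv) ρ₁(x + (1−t)v) dv dx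
  = ∫ ∫ exp(i k ((1−t−Δt)x₀ + (t+Δt)x₁)) ρ₀(x₀) ρ₁(x₁) dx₁ dx₀`. -/
theorem characteristic_function_identity
    (ρ₀ ρ₁ : ℝ → ℝ) (hρ₀m : Measurable ρ₀) (hρ₁m : Measurable ρ₁)
    (hρ₀nn : ∀ x, 0 ≤ ρ₀ x) (hρ₁nn : ∀ x, 0 ≤ ρ₁ x)
    (hρ₀i : Integrable ρ₀ (volume : Measure ℝ))
    (hρ₁i : Integrable ρ₁ (volume : Measure ℝ))
    (hρ₀1 : ∫ x : ℝ, ρ₀ x ∂volume = 1) (hρ₁1 : ∫ x : ℝ, ρ₁ x ∂volume = 1)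
    (t : ℝ) (ht : t ∈ Set.Icc (0 : ℝ) 1) (Δt k : ℝ) :
    (∫ x : ℝ, ∫ v : ℝ,
        Complex.exp (Complex.I * (k : ℂ) * ((x : ℂ) + (v : ℂ) * (Δt : ℂ)))
          * ((ρ₀ (x - t * v) * ρ₁ (x + (1 - t) * v) : ℝ) : ℂ) ∂volume ∂volume)
      = ∫ x₀ : ℝ, ∫ x₁ : ℝ,
          Complex.exp (Complex.I * (k : ℂ)
              * (((1 - t - Δt : ℝ) : ℂ) * (x₀ : ℂ) + ((t + Δt : ℝ) : ℂ) * (x₁ : ℂ)))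
            * ((ρ₀ x₀ * ρ₁ x₁ : ℝ) : ℂ) ∂volume ∂volume := by
  -- the target function on the product space
  set F : ℝ × ℝ → ℂ := fun p =>
    Complex.exp (Complex.I * (k : ℂ)
        * (((1 - t - Δt : ℝ) : ℂ) * (p.1 : ℂ) + ((t + Δt : ℝ) : ℂ) * (p.2 : ℂ)))
      * ((ρ₀ p.1 * ρ₁ p.2 : ℝ) : ℂ) with hF
  -- the linear change of variables e (x, v) = (x - t v, x + (1 - t) v)
  let f : (ℝ × ℝ) →ₗ[ℝ] (ℝ × ℝ) :=
    (LinearMap.fst ℝ ℝ ℝ - t • LinearMap.snd ℝ ℝ ℝ).prod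
      (LinearMap.fst ℝ ℝ ℝ + (1 - t) • LinearMap.snd ℝ ℝ ℝ)
  let g : (ℝ × ℝ) →ₗ[ℝ] (ℝ × ℝ) :=
    ((1 - t) • LinearMap.fst ℝ ℝ ℝ + t • LinearMap.snd ℝ ℝ ℝ).prod
      (LinearMap.snd ℝ ℝ ℝ - LinearMap.fst ℝ ℝ ℝ)
  have hfapp : ∀ p : ℝ × ℝ, f p = (p.1 - t * p.2, p.1 + (1 - t) * p.2) := by
    intro p
    simp [f, LinearMap.prod_apply]
  have hfg : f.comp g = LinearMap.id := by
    apply LinearMap.ext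
    rintro ⟨a, b⟩
    simp [f, g, LinearMap.prod_apply, Prod.ext_iff]
    constructor <;> ring
  have hgf : g.comp f = LinearMap.id := by
    apply LinearMap.ext
    rintro ⟨a, b⟩
    simp [f, g, LinearMap.prod_apply, Prod.ext_iff]
    constructor <;> ring
  let e : (ℝ × ℝ) ≃ₗ[ℝ] (ℝ × ℝ) := LinearEquiv.ofLinear f g hfg hgf
  -- determinant of f is 1
  have hdet : LinearMap.det f = 1 := by
    have : LinearMap.det f =
        Matrix.det (LinearMap.toMatrix (Module.Basis.finTwoProd ℝ) (Module.Basis.finTwoProd ℝ) f) :=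
      (LinearMap.det_toMatrix _ _).symm
    rw [this, Matrix.det_fin_two]
    simp [LinearMap.toMatrix_apply, f, LinearMap.prod_apply]
  -- f is measure preserving
  have hmp : MeasurePreserving (fun p : ℝ × ℝ => f p) volume volume := by
    refine ⟨f.continuous_of_finiteDimensional.measurable, ?_⟩
    rw [Measure.map_linearMap_addHaar_eq_smul_addHaar _ (by rw [hdet]; norm_num)]
    simp [hdet]
  have hemb : MeasurableEmbedding (fun p : ℝ × ℝ => f p) := by
    have := e.toContinuousLinearEquiv.toHomeomorph.measurableEmbedding
    exact this
  -- integrability of F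
  have hFint : Integrable F (volume : Measure (ℝ × ℝ)) := by
    rw [hF]
    have h1 : Integrable (fun p : ℝ × ℝ => ((ρ₀ p.1 * ρ₁ p.2 : ℝ) : ℂ))
        (volume : Measure (ℝ × ℝ)) := by
      rw [MeasureTheory.Measure.volume_eq_prod ℝ ℝ]
      exact (hρ₀i.mul_prod hρ₁i).ofReal
    have h2 : AEStronglyMeasurable (fun p : ℝ × ℝ =>
        Complex.exp (Complex.I * (k : ℂ)
          * (((1 - t - Δt : ℝ) : ℂ) * (p.1 : ℂ) + ((t + Δt : ℝ) : ℂ) * (p.2 : ℂ))))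
        (volume : Measure (ℝ × ℝ)) := by
      apply Continuous.aestronglyMeasurable
      fun_prop
    refine h1.bdd_mul (c := 1) h2 (Filter.Eventually.of_forall fun p => ?_)
    rw [Complex.norm_exp]
    have : (Complex.I * (k : ℂ)
        * (((1 - t - Δt : ℝ) : ℂ) * (p.1 : ℂ) + ((t + Δt : ℝ) : ℂ) * (p.2 : ℂ))).re = 0 := by
      simp [Complex.mul_re, Complex.mul_im]
    rw [this]; simp
  have hFTint : Integrable (fun p : ℝ × ℝ => F (f p)) (volume : Measure (ℝ × ℝ)) :=
    (hmp.integrable_comp_emb hemb).mpr hFint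
  -- pointwise identity for the left-hand integrand
  have hpt : ∀ x v : ℝ,
      Complex.exp (Complex.I * (k : ℂ) * ((x : ℂ) + (v : ℂ) * (Δt : ℂ)))
          * ((ρ₀ (x - t * v) * ρ₁ (x + (1 - t) * v) : ℝ) : ℂ) = F (f (x, v)) := by
    intro x v
    rw [hfapp]
    simp only [hF]
    congr 1
    congr 1
    push_cast
    ring
  calc
    (∫ x : ℝ, ∫ v : ℝ,
        Complex.exp (Complex.I * (k : ℂ) * ((x : ℂ) + (v : ℂ) * (Δt : ℂ)))
          * ((ρ₀ (x - t * v) * ρ₁ (x + (1 - t) * v) : ℝ) : ℂ) ∂volume ∂volume)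
        = ∫ x : ℝ, ∫ v : ℝ, F (f (x, v)) ∂volume ∂volume := by
          simp only [hpt]
    _ = ∫ p : ℝ × ℝ, F (f p) ∂(volume : Measure (ℝ × ℝ)) := by
          rw [MeasureTheory.Measure.volume_eq_prod ℝ ℝ] at hFTint ⊢
          exact MeasureTheory.integral_integral (f := fun x v => F (f (x, v))) hFTint
    _ = ∫ p : ℝ × ℝ, F p ∂(volume : Measure (ℝ × ℝ)) :=
          hmp.integral_comp hemb F
    _ = ∫ x₀ : ℝ, ∫ x₁ : ℝ, F (x₀, x₁) ∂volume ∂volume := by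
          rw [MeasureTheory.Measure.volume_eq_prod ℝ ℝ] at hFint ⊢
          exact (MeasureTheory.integral_integral (f := fun x₀ x₁ => F (x₀, x₁)) hFint).symm
    _ = _ := rfl
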